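/- (Babbage's congruence) Let p be a prime and f : ℕ → ℕ. Define g : ℕ → ℕ by g(r) = binom(p, r·p)_f. Then for all nonnegative integers n and m, binom(n·p, m·p)_f ≡ binom(n,m)_g (mod p²). -/

import Mathlib

/-- The extended binomial coefficient `binom(k,n)_f`: the sum, over all
`k`-tuples `(π₁,…,π_k)` of nonnegative integers with `π₁ + ⋯ + π_k = n`,
of the products `f(π₁)⋯f(π_k)`. It counts the `f`-weighted integer
compositions of `n` with exactly `k` parts. -/
def extBinom (f : ℕ → ℕ) (k n : ℕ) : ℕ :=
  ∑ π ∈ Finset.Nat.antidiagonalTuple k n, ∏ i, f (π i)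

open Finset PowerSeries

lemma extBinom_eq_coeff (f : ℕ → ℕ) (k n : ℕ) :
    extBinom f k n = PowerSeries.coeff (R := ℕ) n ((PowerSeries.mk f) ^ k) := by
  rw [PowerSeries.coeff_pow, extBinom]
  refine Finset.sum_nbij'
    (i := fun π => Finsupp.onFinset (Finset.range k)
      (fun j => if h : j < k then π ⟨j, h⟩ else 0)
      (by intro j hj; simp only [ne_eq, dite_eq_right_iff, not_forall] at hj
          obtain ⟨h, -⟩ := hj; simpa using h))
    (j := fun l => fun i : Fin k => l i) ?_ ?_ ?_ ?_ ?_
  · intro π hπ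
    rw [Finset.mem_finsuppAntidiag]
    constructor
    · rw [Finset.Nat.mem_antidiagonalTuple] at hπ
      rw [← hπ]
      show ∑ j ∈ range k, (if h : j < k then π ⟨j, h⟩ else 0) = _
      rw [← Fin.sum_univ_eq_sum_range (fun j => if h : j < k then π ⟨j, h⟩ else 0)]
      exact Finset.sum_congr rfl fun i _ => by simp [i.is_lt]
    · exact Finsupp.support_onFinset_subset
  · intro l hl
    rw [Finset.mem_finsuppAntidiag] at hl
    rw [Finset.Nat.mem_antidiagonalTuple]
    rw [Fin.sum_univ_eq_sum_range (fun j => l j)]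
    exact hl.1
  · intro π hπ
    funext i
    simp [Fin.is_lt i]
  · intro l hl
    rw [Finset.mem_finsuppAntidiag] at hl
    ext j
    simp only [Finsupp.onFinset_apply]
    split
    · rfl
    · next h =>
      symm; rw [← Finsupp.notMem_support_iff]
      intro hmem
      exact h (Finset.mem_range.mp (hl.2 hmem))
  · intro π hπ
    rw [← Fin.prod_univ_eq_prod_range (fun j => _) k]
    apply Finset.prod_congr rfl
    intro i _
    rw [coeff_mk]
    simp [Fin.is_lt i]


lemma extBinom_sym (f : ℕ → ℕ) (k s : ℕ) (a b : Fin k) :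
    ∑ π ∈ Finset.Nat.antidiagonalTuple k s, π a * ∏ j, f (π j) =
    ∑ π ∈ Finset.Nat.antidiagonalTuple k s, π b * ∏ j, f (π j) := by
  refine Finset.sum_nbij' (i := fun π => π ∘ Equiv.swap a b)
    (j := fun π => π ∘ Equiv.swap a b) ?_ ?_ ?_ ?_ ?_
  · intro π hπ
    rw [Finset.Nat.mem_antidiagonalTuple] at hπ ⊢
    rw [← hπ]
    exact Equiv.sum_comp (Equiv.swap a b) π
  · intro π hπ
    rw [Finset.Nat.mem_antidiagonalTuple] at hπ ⊢
    rw [← hπ]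
    exact Equiv.sum_comp (Equiv.swap a b) π
  · intro π _
    funext i
    simp [Function.comp]
  · intro π _
    funext i
    simp [Function.comp]
  · intro π _
    simp only [Function.comp_apply, Equiv.swap_apply_right]
    congr 1
    exact (Equiv.prod_comp (Equiv.swap a b) (fun j => f (π j))).symm

lemma dvd_extBinom {p : ℕ} (hp : p.Prime) (f : ℕ → ℕ) {s : ℕ} (hs : ¬ p ∣ s) :
    p ∣ extBinom f p s := by
  have hz : (0 : ℕ) < p := hp.pos
  set C := ∑ π ∈ Finset.Nat.antidiagonalTuple p s, π ⟨0, hz⟩ * ∏ j, f (π j) with hC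
  have key : s * extBinom f p s = p * C := by
    rw [extBinom, Finset.mul_sum]
    have h1 : ∀ π ∈ Finset.Nat.antidiagonalTuple p s,
        s * ∏ j, f (π j) = ∑ i : Fin p, π i * ∏ j, f (π j) := by
      intro π hπ
      rw [Finset.Nat.mem_antidiagonalTuple] at hπ
      rw [← Finset.sum_mul, hπ]
    rw [Finset.sum_congr rfl h1, Finset.sum_comm]
    have h2 : ∀ i : Fin p,
        ∑ π ∈ Finset.Nat.antidiagonalTuple p s, π i * ∏ j, f (π j) = C :=
      fun i => extBinom_sym f p s i ⟨0, hz⟩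
    rw [Finset.sum_congr rfl (fun i _ => h2 i), Finset.sum_const, Finset.card_univ,
      Fintype.card_fin, smul_eq_mul]
  have : p ∣ s * extBinom f p s := key ▸ Dvd.intro C rfl
  exact (hp.dvd_mul.mp this).resolve_left hs

theorem extBinom_babbage (p : ℕ) (hp : p.Prime) (f : ℕ → ℕ) (n m : ℕ) :
    extBinom f (n * p) (m * p) ≡
      extBinom (fun r => extBinom f p (r * p)) n m [MOD p ^ 2] := by
  set T : ℕ → ℕ := fun s => extBinom f p s with hT
  -- Step 1: compose
  have hmk : PowerSeries.mk T = (PowerSeries.mk f) ^ p := by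
    ext s
    rw [PowerSeries.coeff_mk, ← extBinom_eq_coeff]
  have step1 : extBinom f (n * p) (m * p) = extBinom T n (m * p) := by
    rw [extBinom_eq_coeff, extBinom_eq_coeff, hmk, ← pow_mul, Nat.mul_comm p n]
  rw [step1]
  -- Step 2: split
  have hsplit := Finset.sum_filter_add_sum_filter_not
    (Finset.Nat.antidiagonalTuple n (m * p)) (fun σ => ∀ i, p ∣ σ i)
    (fun σ => ∏ i, T (σ i))
  have hgood : ∑ σ ∈ (Finset.Nat.antidiagonalTuple n (m * p)).filter (fun σ => ∀ i, p ∣ σ i),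
      ∏ i, T (σ i) = extBinom (fun r => extBinom f p (r * p)) n m := by
    rw [extBinom]
    refine Finset.sum_nbij' (i := fun σ => fun x => σ x / p)
      (j := fun τ => fun x => τ x * p) ?_ ?_ ?_ ?_ ?_
    · intro σ hσ
      rw [Finset.mem_filter, Finset.Nat.mem_antidiagonalTuple] at hσ
      rw [Finset.Nat.mem_antidiagonalTuple]
      have : p * ∑ x, σ x / p = p * m := by
        rw [Finset.mul_sum]
        calc ∑ x, p * (σ x / p) = ∑ x, σ x :=
              Finset.sum_congr rfl fun x _ => Nat.mul_div_cancel' (hσ.2 x)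
          _ = m * p := hσ.1
          _ = p * m := mul_comm _ _
      exact Nat.eq_of_mul_eq_mul_left hp.pos this
    · intro τ hτ
      rw [Finset.Nat.mem_antidiagonalTuple] at hτ
      rw [Finset.mem_filter, Finset.Nat.mem_antidiagonalTuple]
      exact ⟨by rw [← Finset.sum_mul, hτ], fun i => dvd_mul_left p (τ i)⟩
    · intro σ hσ
      rw [Finset.mem_filter] at hσ
      funext x
      exact Nat.div_mul_cancel (hσ.2 x)
    · intro τ _
      funext x
      exact Nat.mul_div_cancel _ hp.pos
    · intro σ hσ
      rw [Finset.mem_filter] at hσ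
      refine Finset.prod_congr rfl fun x _ => ?_
      simp only [hT]
      rw [Nat.div_mul_cancel (hσ.2 x)]
  have hbad : p ^ 2 ∣ ∑ σ ∈ (Finset.Nat.antidiagonalTuple n (m * p)).filter
      (fun σ => ¬ ∀ i, p ∣ σ i), ∏ i, T (σ i) := by
    refine Finset.dvd_sum fun σ hσ => ?_
    rw [Finset.mem_filter, Finset.Nat.mem_antidiagonalTuple] at hσ
    obtain ⟨hsum, hbadσ⟩ := hσ
    push_neg at hbadσ
    obtain ⟨a, ha⟩ := hbadσ
    -- there must be a second bad index
    have hb : ∃ b, b ≠ a ∧ ¬ p ∣ σ b := by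
      by_contra hcon
      push_neg at hcon
      have hrest : p ∣ ∑ x ∈ Finset.univ.erase a, σ x :=
        Finset.dvd_sum fun x hx => hcon x (Finset.ne_of_mem_erase hx)
      have htot : p ∣ σ a + ∑ x ∈ Finset.univ.erase a, σ x := by
        rw [Finset.add_sum_erase _ _ (Finset.mem_univ a), hsum]
        exact dvd_mul_left p m
      exact ha ((Nat.dvd_add_right hrest).mp (by rwa [add_comm] at htot))
    obtain ⟨b, hba, hb⟩ := hb
    have h1 : T (σ a) * T (σ b) ∣ ∏ i, T (σ i) := by
      have := Finset.prod_dvd_prod_of_subset ({a, b} : Finset (Fin n)) Finset.univ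
        (fun i => T (σ i)) (Finset.subset_univ _)
      rwa [Finset.prod_pair (Ne.symm hba)] at this
    have h2 : p * p ∣ T (σ a) * T (σ b) :=
      mul_dvd_mul (dvd_extBinom hp f ha) (dvd_extBinom hp f hb)
    calc p ^ 2 = p * p := sq p
      _ ∣ T (σ a) * T (σ b) := h2
      _ ∣ _ := h1
  -- Assemble
  calc extBinom T n (m * p)
      = extBinom (fun r => extBinom f p (r * p)) n m +
        ∑ σ ∈ (Finset.Nat.antidiagonalTuple n (m * p)).filter
          (fun σ => ¬ ∀ i, p ∣ σ i), ∏ i, T (σ i) := by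
        rw [← hgood]; exact hsplit.symm
    _ ≡ extBinom (fun r => extBinom f p (r * p)) n m + 0 [MOD p ^ 2] :=
        (Nat.ModEq.refl _).add ((Nat.modEq_zero_iff_dvd).mpr hbad)
    _ = extBinom (fun r => extBinom f p (r * p)) n m := add_zero _
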